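/- Let π be the group with presentation ⟨a, b, t | t·a·t⁻¹ = a², a·b·a⁻¹ = b⁻¹, b³ = 1⟩. Then for every finite group Q and every group homomorphism θ : π → Q, the image θ(b) is the identity element of Q. -/

import Mathlib

/-- The relators of the group `π = ⟨a, b, t | tat⁻¹ = a², aba⁻¹ = b⁻¹, b³ = 1⟩`, with the
three generators `a, b, t` encoded as `0, 1, 2 : Fin 3`: the words `t·a·t⁻¹·a⁻²`, `a·b·a⁻¹·b`
and `b³`. -/
def satelliteRels : Set (FreeGroup (Fin 3)) :=
  {FreeGroup.of 2 * FreeGroup.of 0 * (FreeGroup.of 2)⁻¹ * (FreeGroup.of 0 ^ 2)⁻¹,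
   FreeGroup.of 0 * FreeGroup.of 1 * (FreeGroup.of 0)⁻¹ * FreeGroup.of 1,
   FreeGroup.of 1 ^ 3}

/-- For every finite group `Q` and every homomorphism `θ` from
`π = ⟨a, b, t | tat⁻¹ = a², aba⁻¹ = b⁻¹, b³ = 1⟩` to `Q`, the image `θ(b)` is trivial. -/
theorem stmt_10 (Q : Type*) [Group Q] [Finite Q] (θ : PresentedGroup satelliteRels →* Q) :
    θ (PresentedGroup.of (1 : Fin 3)) = 1 := by
  set A := θ (PresentedGroup.of (0 : Fin 3)) with hA
  set B := θ (PresentedGroup.of (1 : Fin 3)) with hB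
  set T := θ (PresentedGroup.of (2 : Fin 3)) with hT
  have hrel : ∀ r ∈ satelliteRels, θ (PresentedGroup.mk satelliteRels r) = 1 := by
    intro r hr
    have h1 : PresentedGroup.mk satelliteRels r = 1 :=
      (QuotientGroup.eq_one_iff r).mpr (Subgroup.subset_normalClosure hr)
    rw [h1, map_one]
  have key : ∀ r ∈ satelliteRels, (FreeGroup.lift (fun i => θ (PresentedGroup.of i))) r = 1 := by
    intro r hr
    have : (FreeGroup.lift (fun i => θ (PresentedGroup.of i))) r
        = θ (PresentedGroup.mk satelliteRels r) := by
      have := FreeGroup.lift_unique (f := fun i => θ (PresentedGroup.of i))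
        (g := θ.comp (PresentedGroup.mk satelliteRels)) (fun x => rfl) (x := r)
      simpa using this.symm
    rw [this]; exact hrel r hr
  have h1 : T * A * T⁻¹ * (A ^ 2)⁻¹ = 1 := by
    have := key _ (Set.mem_insert _ _)
    simpa [map_mul, map_inv, map_pow] using this
  have h2 : A * B * A⁻¹ * B = 1 := by
    have := key _ (Set.mem_insert_of_mem _ (Set.mem_insert _ _))
    simpa [map_mul, map_inv] using this
  have h3 : B ^ 3 = 1 := by
    have := key _ (Set.mem_insert_of_mem _ (Set.mem_insert_of_mem _ rfl))
    simpa [map_pow] using this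
  -- T A T⁻¹ = A², so A and A² have same order
  have hc1 : SemiconjBy T A (A ^ 2) := mul_inv_eq_iff_eq_mul.mp (mul_inv_eq_one.mp h1)
  have hord : orderOf A = orderOf (A ^ 2) := hc1.orderOf_eq T
  have hn : orderOf A ≠ 0 := (isOfFinOrder_of_finite A).orderOf_pos.ne'
  have hodd : ¬ 2 ∣ orderOf A := by
    intro hdvd
    rw [orderOf_pow, Nat.gcd_eq_right hdvd] at hord
    omega
  set n := orderOf A with hndef
  have hn2 : 2 * ((n + 1) / 2) = n + 1 := by omega
  have hAe : (A ^ 2) ^ ((n + 1) / 2) = A := by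
    rw [← pow_mul, hn2, pow_succ, pow_orderOf_eq_one, one_mul]
  have hABA : A * B * A⁻¹ = B⁻¹ := by
    rw [← mul_inv_eq_one]; simpa using h1 ▸ h2
  have hsc : SemiconjBy A B B⁻¹ := mul_inv_eq_iff_eq_mul.mp hABA
  have hsc' : SemiconjBy A B⁻¹ B := by simpa using hsc.inv_right
  have hcomm2 : Commute (A ^ 2) B := by
    rw [sq]
    exact hsc'.mul_left hsc
  have hcomm : Commute A B := by
    have := hcomm2.pow_left ((n + 1) / 2)
    rwa [hAe] at this
  have hBB : B = B⁻¹ := by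
    rw [← hABA, hcomm.eq]; group
  have hB2 : B ^ 2 = 1 := by
    rw [pow_two]; nth_rewrite 2 [hBB]; exact mul_inv_cancel B
  calc B = B ^ 3 * (B ^ 2)⁻¹ := by group
    _ = 1 := by rw [h3, hB2]; group
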